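/- Let θ < κ be infinite regular cardinals. Suppose d : [κ]² → κ has the property that for every τ < κ and every pairwise disjoint family 𝒜 of κ many subsets of κ each of size θ, there exists ε < κ such that for every b ⊆ κ ∖ ε with |b| = θ there is a ∈ 𝒜 with a ⊆ ε and d(α,β) = τ for all α ∈ a and β ∈ b. Suppose e : [κ]² → θ is subadditive and for every S ⊆ κ with |S| = κ, the set {e(α,β) : α < β, α,β ∈ S} is cofinal in θ. Let π : κ → κ × κ be a bijection and set c = π ∘ d. Then for every A ⊆ κ with |A| = κ there exists a club D ⊆ κ such that for every δ ∈ D, every β ∈ κ ∖ δ, every pair (ξ₀, ξ₁) ∈ δ × δ, and every i < θ, there are cofinally many α < δ such that α ∈ A, c(α,β) = (ξ₀, ξ₁) and e(α,β) > i. -/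

import Mathlib

open Cardinal Set

/-- `D` is a club in (the set of ordinals below) `o`: `D ⊆ o`, `D` is unbounded in `o`,
and `D` contains the supremum of each of its nonempty subsets that is bounded below `o`. -/
def IsClubIn (D : Set Ordinal) (o : Ordinal) : Prop :=
  D ⊆ Set.Iio o ∧ (∀ a < o, ∃ b ∈ D, a ≤ b) ∧
    (∀ S : Set Ordinal, S ⊆ D → S.Nonempty → sSup S < o → sSup S ∈ D)

/-- A coloring of pairs of ordinals below `κ` is subadditive. -/
def SubadditiveOn (e : Ordinal → Ordinal → Ordinal) (κ : Ordinal) : Prop :=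
  ∀ α β γ : Ordinal, α < β → β < γ → γ < κ →
    e α γ ≤ max (e α β) (e β γ) ∧ e α β ≤ max (e α γ) (e β γ)

/-- Let `θ < κ` be infinite regular cardinals, `d : [κ]² → κ` a strong coloring (a witness to
`pr₁(κ,κ,κ,θ⁺)`-type behaviour), `e : [κ]² → θ` subadditive with `e“[S]²` cofinal in `θ`
for every `S ⊆ κ` of full size, `π : κ ↔ κ × κ` a bijection and `c = π ∘ d`. Then for every
`A ⊆ κ` of full size there is a club `D ⊆ κ` such that for every `δ ∈ D`, every `β ∈ κ ∖ δ`,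
every `(ξ₀,ξ₁) ∈ δ × δ` and every `i < θ`, there are cofinally many `α < δ` with `α ∈ A`,
`c(α,β) = (ξ₀,ξ₁)` and `e(α,β) > i`. -/

private lemma lt_add_one' (o : Ordinal) : o < o + 1 := by
  rw [Ordinal.add_one_eq_succ]; exact Order.lt_succ o

private lemma succ_lt_ord {κ : Cardinal.{0}} (hκ : ℵ₀ ≤ κ) {o : Ordinal} (h : o < κ.ord) :
    o + 1 < κ.ord := by
  rw [Ordinal.add_one_eq_succ]; exact (Cardinal.isSuccLimit_ord hκ).succ_lt h

private lemma tail_large {κ : Cardinal.{0}} (hκ : κ.IsRegular) {A : Set Ordinal}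
    (hAcard : #A = Cardinal.lift.{1} κ) {B : Ordinal} (hB : B < κ.ord) :
    #{x ∈ A | B ≤ x} = Cardinal.lift.{1} κ := by
  refine le_antisymm (hAcard ▸ mk_le_mk_of_subset (sep_subset _ _)) ?_
  by_contra h
  push_neg at h
  have hsplit : A ⊆ {x ∈ A | B ≤ x} ∪ (A ∩ Set.Iio B) := by
    intro x hx
    rcases le_or_gt B x with h' | h'
    · exact Or.inl ⟨hx, h'⟩
    · exact Or.inr ⟨hx, h'⟩
  have h2 : #(A ∩ Set.Iio B : Set Ordinal) < Cardinal.lift.{1} κ := by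
    calc #(A ∩ Set.Iio B : Set Ordinal) ≤ #(Set.Iio B) :=
          mk_le_mk_of_subset inter_subset_right
      _ = Cardinal.lift.{1} B.card := Ordinal.mk_Iio_ordinal B
      _ < Cardinal.lift.{1} κ := lift_lt.2 (Cardinal.lt_ord.1 hB)
  have h3 := (mk_le_mk_of_subset hsplit).trans (mk_union_le _ _)
  rw [hAcard] at h3
  exact absurd (h3.trans_lt (Cardinal.add_lt_of_lt (aleph0_le_lift.2 hκ.aleph0_le) h h2))
    (lt_irrefl _)

private lemma exists_goodSet {θ κ : Cardinal.{0}} (hκ : κ.IsRegular) (hθ : ℵ₀ ≤ θ) (hθκ : θ < κ)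
    (e : Ordinal → Ordinal → Ordinal)
    {A : Set Ordinal} (hA : A ⊆ Set.Iio κ.ord) (hAcard : #A = Cardinal.lift.{1} κ)
    (hU : ∀ S : Set Ordinal, S ⊆ Set.Iio κ.ord → #S = Cardinal.lift.{1} κ →
      ∀ i < θ.ord, ∃ α ∈ S, ∃ β ∈ S, α < β ∧ i ≤ e α β)
    {η : Ordinal} (hη : η < κ.ord) :
    ∃ a : Set Ordinal, ∃ bd : Ordinal, bd < κ.ord ∧ a ⊆ A ∧ (∀ x ∈ a, η ≤ x) ∧
      a ⊆ Set.Iio bd ∧ #a = Cardinal.lift.{1} θ ∧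
      ∀ i < θ.ord, ∃ α ∈ a, ∃ β ∈ a, α < β ∧ i < e α β := by
  classical
  have hθord : θ.ord < κ.ord := Cardinal.ord_lt_ord.2 hθκ
  let p : Ordinal → Ordinal × Ordinal := Ordinal.lt_wf.fix
    (fun j IH =>
      if h : ∃ pr : Ordinal × Ordinal,
          (pr.1 ∈ A ∧ max η (Ordinal.bsup j fun j' h' => (IH j' h').2 + 1) ≤ pr.1) ∧
          (pr.2 ∈ A ∧ max η (Ordinal.bsup j fun j' h' => (IH j' h').2 + 1) ≤ pr.2) ∧
          pr.1 < pr.2 ∧ j + 1 ≤ e pr.1 pr.2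
        then h.choose else (0, 0))
  let B : Ordinal → Ordinal := fun j => max η (Ordinal.bsup j fun j' _ => (p j').2 + 1)
  let Q : Ordinal → Prop := fun j => ∃ pr : Ordinal × Ordinal,
    (pr.1 ∈ A ∧ B j ≤ pr.1) ∧ (pr.2 ∈ A ∧ B j ≤ pr.2) ∧ pr.1 < pr.2 ∧ j + 1 ≤ e pr.1 pr.2
  have hp : ∀ j, p j = if h : Q j then h.choose else (0, 0) := fun j =>
    WellFounded.fix_eq _ _ j
  have key : ∀ j, j < θ.ord →
      ((p j).1 ∈ A ∧ B j ≤ (p j).1) ∧ ((p j).2 ∈ A ∧ B j ≤ (p j).2) ∧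
      (p j).1 < (p j).2 ∧ j + 1 ≤ e (p j).1 (p j).2 := by
    intro j
    induction j using Ordinal.induction with
    | _ j IH =>
      intro hj
      have hBj : B j < κ.ord := by
        apply max_lt hη
        apply Cardinal.bsup_lt_ord_of_isRegular hκ (Cardinal.lt_ord.1 (hj.trans hθord))
        intro j' hj'
        exact succ_lt_ord hκ.aleph0_le (hA (IH j' hj' (hj'.trans hj)).2.1.1)
      have hSsub : {x ∈ A | B j ≤ x} ⊆ Set.Iio κ.ord := fun x hx => hA hx.1
      have hj1 : j + 1 < θ.ord := succ_lt_ord hθ hj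
      obtain ⟨α, hα, β, hβ, hab, he⟩ := hU _ hSsub (tail_large hκ hAcard hBj) (j + 1) hj1
      have hQ : Q j := ⟨(α, β), ⟨hα.1, hα.2⟩, ⟨hβ.1, hβ.2⟩, hab, he⟩
      rw [hp j, dif_pos hQ]
      exact hQ.choose_spec
  have mono : ∀ j' j, j' < j → j < θ.ord → (p j').2 < (p j).1 := by
    intro j' j h hj
    calc (p j').2 < (p j').2 + 1 := lt_add_one' _
      _ ≤ Ordinal.bsup j (fun j' _ => (p j').2 + 1) := Ordinal.le_bsup _ j' h
      _ ≤ B j := le_max_right _ _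
      _ ≤ (p j).1 := (key j hj).1.2
  refine ⟨(fun j => (p j).1) '' Set.Iio θ.ord ∪ (fun j => (p j).2) '' Set.Iio θ.ord,
    max η (Ordinal.bsup θ.ord fun j' _ => (p j').2 + 1), ?_, ?_, ?_, ?_, ?_, ?_⟩
  · apply max_lt hη
    apply Cardinal.bsup_lt_ord_of_isRegular hκ (by rw [Cardinal.card_ord]; exact hθκ)
    intro j' hj'
    exact succ_lt_ord hκ.aleph0_le (hA (key j' hj').2.1.1)
  · rintro x (⟨j, hj, rfl⟩ | ⟨j, hj, rfl⟩)
    · exact (key j hj).1.1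
    · exact (key j hj).2.1.1
  · rintro x (⟨j, hj, rfl⟩ | ⟨j, hj, rfl⟩)
    · exact (le_max_left _ _).trans (key j hj).1.2
    · exact (le_max_left _ _).trans (key j hj).2.1.2
  · rintro x (⟨j, hj, rfl⟩ | ⟨j, hj, rfl⟩)
    · exact lt_of_lt_of_le ((key j hj).2.2.1.trans (lt_add_one' _))
        (((Ordinal.le_bsup _ j hj).trans (le_max_right _ _)))
    · exact lt_of_lt_of_le (lt_add_one' _) ((Ordinal.le_bsup _ j hj).trans (le_max_right _ _))
  · have hinj : Set.InjOn (fun j => (p j).1) (Set.Iio θ.ord) := by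
      intro j1 h1 j2 h2 hEq
      by_contra hne
      rcases Ne.lt_or_gt hne with h | h
      · exact absurd hEq (((key j1 h1).2.2.1.trans (mono j1 j2 h h2)).ne)
      · exact absurd hEq.symm (((key j2 h2).2.2.1.trans (mono j2 j1 h h1)).ne)
    have himg : #((fun j => (p j).1) '' Set.Iio θ.ord) = Cardinal.lift.{1} θ := by
      rw [Cardinal.mk_image_eq_of_injOn _ _ hinj, Ordinal.mk_Iio_ordinal, Cardinal.card_ord]
    refine le_antisymm ?_ (himg ▸ mk_le_mk_of_subset subset_union_left)
    calc #((fun j => (p j).1) '' Set.Iio θ.ord ∪ (fun j => (p j).2) '' Set.Iio θ.ord : Set Ordinal)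
        ≤ #((fun j => (p j).1) '' Set.Iio θ.ord) + #((fun j => (p j).2) '' Set.Iio θ.ord) :=
          mk_union_le _ _
      _ ≤ Cardinal.lift.{1} θ + Cardinal.lift.{1} θ := by
          refine add_le_add (mk_image_le.trans_eq ?_) (mk_image_le.trans_eq ?_) <;>
            rw [Ordinal.mk_Iio_ordinal, Cardinal.card_ord]
      _ = Cardinal.lift.{1} θ := Cardinal.add_eq_self (aleph0_le_lift.2 hθ)
  · intro i hi
    exact ⟨(p i).1, Or.inl ⟨i, hi, rfl⟩, (p i).2, Or.inr ⟨i, hi, rfl⟩, (key i hi).2.2.1,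
      lt_of_lt_of_le (lt_add_one' i) (key i hi).2.2.2⟩

private lemma exists_family {θ κ : Cardinal.{0}} (hκ : κ.IsRegular) (hθ : ℵ₀ ≤ θ) (hθκ : θ < κ)
    (e : Ordinal → Ordinal → Ordinal)
    {A : Set Ordinal} (hA : A ⊆ Set.Iio κ.ord) (hAcard : #A = Cardinal.lift.{1} κ)
    (hU : ∀ S : Set Ordinal, S ⊆ Set.Iio κ.ord → #S = Cardinal.lift.{1} κ →
      ∀ i < θ.ord, ∃ α ∈ S, ∃ β ∈ S, α < β ∧ i ≤ e α β)
    {η₀ : Ordinal} (hη₀ : η₀ < κ.ord) :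
    ∃ 𝒜 : Set (Set Ordinal),
      (∀ a ∈ 𝒜, a ⊆ Set.Iio κ.ord ∧ #a = Cardinal.lift.{1} θ) ∧
      (∀ a ∈ 𝒜, ∀ b ∈ 𝒜, a ≠ b → Disjoint a b) ∧
      #𝒜 = Cardinal.lift.{1} κ ∧
      ∀ a ∈ 𝒜, a ⊆ A ∧ (∀ x ∈ a, η₀ ≤ x) ∧
        ∀ i < θ.ord, ∃ α ∈ a, ∃ β ∈ a, α < β ∧ i < e α β := by
  classical
  have H : ∀ ηx : Ordinal, ∃ a : Set Ordinal, ∃ bd : Ordinal, ηx < κ.ord →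
      (bd < κ.ord ∧ a ⊆ A ∧ (∀ x ∈ a, ηx ≤ x) ∧ a ⊆ Set.Iio bd ∧
        #a = Cardinal.lift.{1} θ ∧ ∀ i < θ.ord, ∃ α ∈ a, ∃ β ∈ a, α < β ∧ i < e α β) := by
    intro ηx
    by_cases hηx : ηx < κ.ord
    · obtain ⟨a, bd, h⟩ := exists_goodSet hκ hθ hθκ e hA hAcard hU hηx
      exact ⟨a, bd, fun _ => h⟩
    · exact ⟨∅, 0, fun h => absurd h hηx⟩
  choose aSet bdf hgood using H
  let F : Ordinal → Ordinal := Ordinal.lt_wf.fix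
    (fun ι IH => max η₀ (Ordinal.bsup ι fun ι' h => max (bdf (IH ι' h)) (IH ι' h) + 1))
  have hF : ∀ ι, F ι = max η₀ (Ordinal.bsup ι fun ι' _ => max (bdf (F ι')) (F ι') + 1) :=
    fun ι => WellFounded.fix_eq _ _ ι
  have keyF : ∀ ι, ι < κ.ord → F ι < κ.ord := by
    intro ι
    induction ι using Ordinal.induction with
    | _ ι IH =>
      intro hι
      rw [hF ι]
      apply max_lt hη₀
      apply Cardinal.bsup_lt_ord_of_isRegular hκ (Cardinal.lt_ord.1 hι)
      intro ι' hι'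
      have h1 := IH ι' hι' (hι'.trans hι)
      exact succ_lt_ord hκ.aleph0_le (max_lt (hgood (F ι') h1).1 h1)
  have hFle : ∀ ι' ι, ι' < ι → max (bdf (F ι')) (F ι') + 1 ≤ F ι := by
    intro ι' ι h
    rw [hF ι]
    exact (Ordinal.le_bsup _ ι' h).trans (le_max_right _ _)
  have hη₀F : ∀ ι, η₀ ≤ F ι := fun ι => by rw [hF ι]; exact le_max_left _ _
  have hdisj : ∀ ι' ι, ι' < ι → ι < κ.ord → Disjoint (aSet (F ι')) (aSet (F ι)) := by
    intro ι' ι h hι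
    have g' := hgood (F ι') (keyF ι' (h.trans hι))
    have g := hgood (F ι) (keyF ι hι)
    rw [Set.disjoint_left]
    intro x hx hx2
    have h1 : x < bdf (F ι') := g'.2.2.2.1 hx
    have h2 : F ι ≤ x := g.2.2.1 x hx2
    have h3 : bdf (F ι') ≤ F ι :=
      ((le_max_left _ _).trans ((lt_add_one' _).le)).trans (hFle ι' ι h)
    exact absurd (h1.trans_le (h3.trans h2)) (lt_irrefl x)
  have hθpos : (0 : Ordinal) < θ.ord := (Cardinal.isSuccLimit_ord hθ).pos
  have hne : ∀ ι' ι, ι' < ι → ι < κ.ord → aSet (F ι') ≠ aSet (F ι) := by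
    intro ι' ι h hι hEq
    obtain ⟨α, hα, -⟩ := (hgood (F ι) (keyF ι hι)).2.2.2.2.2 0 hθpos
    exact Set.disjoint_left.1 (hdisj ι' ι h hι) (hEq ▸ hα) hα
  refine ⟨(fun ι => aSet (F ι)) '' Set.Iio κ.ord, ?_, ?_, ?_, ?_⟩
  · rintro a ⟨ι, hι, rfl⟩
    have g := hgood (F ι) (keyF ι hι)
    exact ⟨fun x hx => hA (g.2.1 hx), g.2.2.2.2.1⟩
  · rintro a ⟨ι1, h1, rfl⟩ b ⟨ι2, h2, rfl⟩ hab
    rcases lt_trichotomy ι1 ι2 with h | h | h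
    · exact hdisj ι1 ι2 h h2
    · exact absurd (by rw [h]) hab
    · exact (hdisj ι2 ι1 h h1).symm
  · have hinj : Set.InjOn (fun ι => aSet (F ι)) (Set.Iio κ.ord) := by
      intro ι1 h1 ι2 h2 hEq
      by_contra hneq
      rcases Ne.lt_or_gt hneq with h | h
      · exact hne ι1 ι2 h h2 hEq
      · exact hne ι2 ι1 h h1 hEq.symm
    rw [Cardinal.mk_image_eq_of_injOn _ _ hinj, Ordinal.mk_Iio_ordinal, Cardinal.card_ord]
  · rintro a ⟨ι, hι, rfl⟩
    have g := hgood (F ι) (keyF ι hι)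
    exact ⟨g.2.1, fun x hx => (hη₀F ι).trans (g.2.2.1 x hx), g.2.2.2.2.2⟩

private lemma club_of_fun {κ : Cardinal.{0}} (hκ : κ.IsRegular) (hκℵ : ℵ₀ < κ)
    (g : Ordinal → Ordinal) (hg : ∀ ζ < κ.ord, g ζ < κ.ord) :
    IsClubIn {δ | δ < κ.ord ∧ ∀ ζ < δ, g ζ ≤ δ} κ.ord := by
  refine ⟨fun δ hδ => hδ.1, ?_, ?_⟩
  · intro x hx
    set G : Ordinal → Ordinal := fun y => max (y + 1) (Ordinal.bsup (y + 1) fun ζ _ => g ζ)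
      with hGdef
    have hG : ∀ y < κ.ord, G y < κ.ord := by
      intro y hy
      apply max_lt (succ_lt_ord hκ.aleph0_le hy)
      apply Cardinal.bsup_lt_ord_of_isRegular hκ (Cardinal.lt_ord.1 (succ_lt_ord hκ.aleph0_le hy))
      intro ζ hζ
      exact hg ζ (hζ.trans (succ_lt_ord hκ.aleph0_le hy))
    have hGgt : ∀ y, y < G y := fun y => (lt_add_one' y).trans_le (le_max_left _ _)
    set δ : ℕ → Ordinal := fun n => G^[n] x with hδdef
    have hδκ : ∀ n, δ n < κ.ord := by
      intro n
      induction n with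
      | zero => exact hx
      | succ n ih =>
        have : δ (n + 1) = G (δ n) := Function.iterate_succ_apply' G n x
        rw [this]; exact hG _ ih
    have hbdd : BddAbove (Set.range δ) := Ordinal.bddAbove_range δ
    have hδsκ : (⨆ n, δ n) < κ.ord := by
      apply Cardinal.iSup_lt_ord_of_isRegular hκ (by rw [Cardinal.mk_nat]; exact hκℵ) hδκ
    refine ⟨⨆ n, δ n, ⟨hδsκ, ?_⟩, le_ciSup hbdd 0⟩
    intro ζ hζ
    obtain ⟨n, hn⟩ := Ordinal.lt_iSup_iff.1 hζ
    have h1 : g ζ ≤ G (δ n) :=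
      (Ordinal.le_bsup _ ζ (hn.trans (lt_add_one' _))).trans (le_max_right _ _)
    have h2 : G (δ n) = δ (n + 1) := (Function.iterate_succ_apply' G n x).symm
    exact h1.trans (h2 ▸ le_ciSup hbdd (n + 1))
  · intro S hS hne hlt
    refine ⟨hlt, ?_⟩
    intro ζ hζ
    have hbdd : BddAbove S := ⟨κ.ord, fun s hs => le_of_lt (hS hs).1⟩
    obtain ⟨s, hsS, hζs⟩ := (lt_csSup_iff hbdd hne).1 hζ
    exact ((hS hsS).2 ζ hζs).trans (le_csSup hbdd hsS)

theorem colorings_from_pr1_and_unbounded (θ κ : Cardinal.{0}) (hθ : θ.IsRegular)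
    (hκ : κ.IsRegular) (hθκ : θ < κ)
    (d : Ordinal → Ordinal → Ordinal)
    (hdran : ∀ α β : Ordinal, α < β → β < κ.ord → d α β < κ.ord)
    (hd : ∀ τ < κ.ord, ∀ 𝒜 : Set (Set Ordinal),
      (∀ a ∈ 𝒜, a ⊆ Set.Iio κ.ord ∧ #a = Cardinal.lift.{1} θ) →
      (∀ a ∈ 𝒜, ∀ b ∈ 𝒜, a ≠ b → Disjoint a b) →
      #𝒜 = Cardinal.lift.{1} κ →
      ∃ ε < κ.ord, ∀ b : Set Ordinal, b ⊆ Set.Iio κ.ord → (∀ x ∈ b, ε ≤ x) →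
        #b = Cardinal.lift.{1} θ →
        ∃ a ∈ 𝒜, a ⊆ Set.Iio ε ∧ ∀ α ∈ a, ∀ β ∈ b, d α β = τ)
    (e : Ordinal → Ordinal → Ordinal)
    (heran : ∀ α β : Ordinal, α < β → β < κ.ord → e α β < θ.ord)
    (hsub : SubadditiveOn e κ.ord)
    (hU : ∀ S : Set Ordinal, S ⊆ Set.Iio κ.ord → #S = Cardinal.lift.{1} κ →
      ∀ i < θ.ord, ∃ α ∈ S, ∃ β ∈ S, α < β ∧ i ≤ e α β)
    (π : Ordinal → Ordinal × Ordinal)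
    (hπ : Set.BijOn π (Set.Iio κ.ord) (Set.Iio κ.ord ×ˢ Set.Iio κ.ord))
    (c : Ordinal → Ordinal → Ordinal × Ordinal)
    (hc : ∀ α β : Ordinal, c α β = π (d α β)) :
    ∀ A : Set Ordinal, A ⊆ Set.Iio κ.ord → #A = Cardinal.lift.{1} κ →
      ∃ D : Set Ordinal, IsClubIn D κ.ord ∧
        ∀ δ ∈ D, ∀ β : Ordinal, δ ≤ β → β < κ.ord →
          ∀ ξ₀ < δ, ∀ ξ₁ < δ, ∀ i < θ.ord, ∀ η < δ,
            ∃ α : Ordinal, η ≤ α ∧ α < δ ∧ α ∈ A ∧ c α β = (ξ₀, ξ₁) ∧ i < e α β := by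
  classical
  intro A hA hAcard
  have hθℵ : ℵ₀ ≤ θ := hθ.aleph0_le
  have hκℵ : ℵ₀ < κ := hθℵ.trans_lt hθκ
  -- disjoint families of good sets
  have Hfam : ∀ ηx : Ordinal, ∃ 𝒜 : Set (Set Ordinal), ηx < κ.ord →
      ((∀ a ∈ 𝒜, a ⊆ Set.Iio κ.ord ∧ #a = Cardinal.lift.{1} θ) ∧
       (∀ a ∈ 𝒜, ∀ b ∈ 𝒜, a ≠ b → Disjoint a b) ∧
       #𝒜 = Cardinal.lift.{1} κ ∧
       ∀ a ∈ 𝒜, a ⊆ A ∧ (∀ x ∈ a, ηx ≤ x) ∧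
         ∀ i < θ.ord, ∃ α ∈ a, ∃ β ∈ a, α < β ∧ i < e α β) := by
    intro ηx
    by_cases hηx : ηx < κ.ord
    · obtain ⟨𝒜, h⟩ := exists_family hκ hθℵ hθκ e hA hAcard hU hηx
      exact ⟨𝒜, fun _ => h⟩
    · exact ⟨∅, fun h => absurd h hηx⟩
  choose fam hfam using Hfam
  -- inverses of π
  have Hτ : ∀ ξ₀ ξ₁ : Ordinal, ∃ τ : Ordinal, ξ₀ < κ.ord → ξ₁ < κ.ord →
      τ < κ.ord ∧ π τ = (ξ₀, ξ₁) := by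
    intro ξ₀ ξ₁
    by_cases h : ξ₀ < κ.ord ∧ ξ₁ < κ.ord
    · obtain ⟨τ, hτ1, hτ2⟩ := hπ.2.2 (Set.mem_prod.2 ⟨h.1, h.2⟩ :
        ((ξ₀, ξ₁) : Ordinal × Ordinal) ∈ Set.Iio κ.ord ×ˢ Set.Iio κ.ord)
      exact ⟨τ, fun _ _ => ⟨hτ1, hτ2⟩⟩
    · exact ⟨0, fun h1 h2 => absurd ⟨h1, h2⟩ h⟩
  choose tau htau using Hτ
  -- ε from the strong coloring
  have Hε : ∀ τ ηx : Ordinal, ∃ ε : Ordinal, τ < κ.ord → ηx < κ.ord → ε < κ.ord ∧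
      ∀ b : Set Ordinal, b ⊆ Set.Iio κ.ord → (∀ x ∈ b, ε ≤ x) → #b = Cardinal.lift.{1} θ →
        ∃ a ∈ fam ηx, a ⊆ Set.Iio ε ∧ ∀ α ∈ a, ∀ β ∈ b, d α β = τ := by
    intro τ ηx
    by_cases h : τ < κ.ord ∧ ηx < κ.ord
    · obtain ⟨h1, h2, h3, -⟩ := hfam ηx h.2
      obtain ⟨ε, hε, hεp⟩ := hd τ h.1 (fam ηx) h1 h2 h3
      exact ⟨ε, fun _ _ => ⟨hε, hεp⟩⟩
    · exact ⟨0, fun h1 h2 => absurd ⟨h1, h2⟩ h⟩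
  choose eps heps using Hε
  -- the club function
  set g : Ordinal → Ordinal := fun ζ =>
    Ordinal.bsup (ζ + 1) fun ξ₀ _ => Ordinal.bsup (ζ + 1) fun ξ₁ _ =>
      Ordinal.bsup (ζ + 1) fun ηx _ => eps (tau ξ₀ ξ₁) ηx with hgdef
  have hg : ∀ ζ < κ.ord, g ζ < κ.ord := by
    intro ζ hζ
    have hζ1 : ζ + 1 < κ.ord := succ_lt_ord hκ.aleph0_le hζ
    have hcard : (ζ + 1).card < κ := Cardinal.lt_ord.1 hζ1
    refine Cardinal.bsup_lt_ord_of_isRegular hκ hcard fun ξ₀ h₀ => ?_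
    refine Cardinal.bsup_lt_ord_of_isRegular hκ hcard fun ξ₁ h₁ => ?_
    refine Cardinal.bsup_lt_ord_of_isRegular hκ hcard fun ηx hηx => ?_
    exact (heps _ _ ((htau ξ₀ ξ₁ (h₀.trans hζ1) (h₁.trans hζ1)).1) (hηx.trans hζ1)).1
  refine ⟨{δ | δ < κ.ord ∧ ∀ ζ < δ, g ζ ≤ δ}, club_of_fun hκ hκℵ g hg, ?_⟩
  rintro δ ⟨hδκ, hδcl⟩ β hδβ hβκ ξ₀ hξ₀ ξ₁ hξ₁ i hi η hη
  obtain ⟨hτκ, hπτ⟩ := htau ξ₀ ξ₁ (hξ₀.trans hδκ) (hξ₁.trans hδκ)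
  have hηκ : η < κ.ord := hη.trans hδκ
  obtain ⟨hεκ, hεp⟩ := heps (tau ξ₀ ξ₁) η hτκ hηκ
  -- ε ≤ δ
  have hζδ : max (max ξ₀ ξ₁) η < δ := max_lt (max_lt hξ₀ hξ₁) hη
  have hεδ : eps (tau ξ₀ ξ₁) η ≤ δ := by
    refine le_trans ?_ (hδcl _ hζδ)
    have hξ₀' : ξ₀ < max (max ξ₀ ξ₁) η + 1 :=
      ((le_max_left _ _).trans (le_max_left _ _)).trans_lt (lt_add_one' _)
    have hξ₁' : ξ₁ < max (max ξ₀ ξ₁) η + 1 :=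
      ((le_max_right _ _).trans (le_max_left _ _)).trans_lt (lt_add_one' _)
    have hη' : η < max (max ξ₀ ξ₁) η + 1 := (le_max_right _ _).trans_lt (lt_add_one' _)
    calc eps (tau ξ₀ ξ₁) η
        ≤ Ordinal.bsup (max (max ξ₀ ξ₁) η + 1) (fun ηx _ => eps (tau ξ₀ ξ₁) ηx) :=
          Ordinal.le_bsup _ η hη'
      _ ≤ Ordinal.bsup (max (max ξ₀ ξ₁) η + 1) (fun ξ₁' _ =>
            Ordinal.bsup (max (max ξ₀ ξ₁) η + 1) fun ηx _ => eps (tau ξ₀ ξ₁') ηx) :=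
          Ordinal.le_bsup _ ξ₁ hξ₁'
      _ ≤ g (max (max ξ₀ ξ₁) η) := Ordinal.le_bsup _ ξ₀ hξ₀'
  -- the tail set b
  have hbsub : (fun j => β + j) '' Set.Iio θ.ord ⊆ Set.Iio κ.ord := by
    rintro x ⟨j, hj, rfl⟩
    exact Ordinal.isPrincipal_add_ord hκ.aleph0_le hβκ (hj.trans (Cardinal.ord_lt_ord.2 hθκ))
  have hbge : ∀ x ∈ (fun j => β + j) '' Set.Iio θ.ord, eps (tau ξ₀ ξ₁) η ≤ x := by
    rintro x ⟨j, hj, rfl⟩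
    exact hεδ.trans (hδβ.trans (le_self_add))
  have hbcard : #((fun j => β + j) '' Set.Iio θ.ord) = Cardinal.lift.{1} θ := by
    rw [Cardinal.mk_image_eq_of_injOn _ _ (fun j1 _ j2 _ h => add_left_cancel h),
      Ordinal.mk_Iio_ordinal, Cardinal.card_ord]
  obtain ⟨a, haf, haε, had⟩ := hεp _ hbsub hbge hbcard
  have hβb : β ∈ (fun j => β + j) '' Set.Iio θ.ord :=
    ⟨0, (Cardinal.isSuccLimit_ord hθℵ).pos, add_zero β⟩
  have hprops := (hfam η hηκ).2.2.2 a haf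
  obtain ⟨α, hαa, α', hα'a, hαα', hie⟩ := hprops.2.2 i hi
  have hα'β : α' < β := (haε hα'a).trans_le (hεδ.trans hδβ)
  have hmax : i < max (e α β) (e α' β) :=
    hie.trans_le (hsub α α' β hαα' hα'β hβκ).2
  rcases lt_max_iff.1 hmax with h | h
  · refine ⟨α, hprops.2.1 α hαa, (haε hαa).trans_le hεδ, hprops.1 hαa, ?_, h⟩
    rw [hc, had α hαa β hβb]; exact hπτ
  · refine ⟨α', hprops.2.1 α' hα'a, (haε hα'a).trans_le hεδ, hprops.1 hα'a, ?_, h⟩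
    rw [hc, had α' hα'a β hβb]; exact hπτ
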